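/- arXiv:2303.15667 — 2 statements merged into one kernel-verified Lean document; each statement's English description precedes it below -/
import Mathlib

section
/- The HST and LHST cost functions satisfy C_HST(U,V) ≤ M · C_LHST(U,V) for unitaries U, V on an M-qubit system, where C_LHST(U,V) = (1/M) Σ_{μ=1}^{M} C_LHST^{(μ)}(U,V), i.e., C_HST(U,V) ≤ Σ_μ C_LHST^{(μ)}(U,V). -/
open Matrix

namespace Stmt6

abbrev B2 := Fin 2 × Fin 2
abbrev Idx (M : ℕ) := (Fin M → Fin 2) × (Fin M → Fin 2)

noncomputable def bell (x y : B2) : ℂ :=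
  (1/2) * ((if x.1 = x.2 then 1 else 0) * (if y.1 = y.2 then 1 else 0))

noncomputable def del (x y : B2) : ℂ := if x = y then 1 else 0

variable {M : ℕ}

noncomputable def matOf (k : Fin M → B2 → B2 → ℂ) : Matrix (Idx M) (Idx M) ℂ :=
  Matrix.of fun p q => ∏ ν, k ν (p.1 ν, p.2 ν) (q.1 ν, q.2 ν)

lemma sum_prod_idx (F : Fin M → B2 → ℂ) :
    ∑ r : Idx M, ∏ ν, F ν (r.1 ν, r.2 ν) = ∏ ν, ∑ z : B2, F ν z := by
  have h1 : ∏ ν, ∑ z : B2, F ν z = ∑ w : Fin M → B2, ∏ ν, F ν (w ν) :=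
    Fintype.prod_sum (fun ν (z : B2) => F ν z)
  rw [h1]
  exact (Fintype.sum_equiv (Equiv.arrowProdEquivProdArrow (Fin M) (fun _ => Fin 2) (fun _ => Fin 2))
    _ _ (fun w => rfl)).symm

lemma matOf_mul (k l : Fin M → B2 → B2 → ℂ) :
    matOf k * matOf l = matOf (fun ν x y => ∑ z : B2, k ν x z * l ν z y) := by
  ext p q
  simp only [matOf, Matrix.mul_apply, Matrix.of_apply]
  rw [← sum_prod_idx (fun ν z => k ν (p.1 ν, p.2 ν) z * l ν z (q.1 ν, q.2 ν))]
  exact Finset.sum_congr rfl fun r _ => (Finset.prod_mul_distrib).symm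

lemma bell_comp (x y : B2) : (∑ z : B2, bell x z * bell z y) = bell x y := by
  simp [bell, Fintype.sum_prod_type, Fin.sum_univ_two]

lemma del_comp (f : B2 → B2 → ℂ) (x y : B2) : (∑ z : B2, del x z * f z y) = f x y := by
  simp [del, ite_mul, Finset.sum_ite_eq]

lemma comp_del (f : B2 → B2 → ℂ) (x y : B2) : (∑ z : B2, f x z * del z y) = f x y := by
  simp [del, mul_ite, Finset.sum_ite_eq']

lemma star_bell (x y : B2) : star (bell x y) = bell y x := by
  simp [bell]
  split_ifs <;> norm_num [Complex.ext_iff]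

lemma star_del (x y : B2) : star (del x y) = del y x := by
  by_cases h : x = y
  · simp [del, h]
  · simp [del, h, Ne.symm h]

noncomputable def Q (s : Finset (Fin M)) : Matrix (Idx M) (Idx M) ℂ :=
  matOf (fun ν => if ν ∈ s then bell else del)

lemma Q_mul_Q (s t : Finset (Fin M)) : Q s * Q t = Q (s ∪ t) := by
  unfold Q
  rw [matOf_mul]
  refine congrArg matOf (funext fun ν => funext fun x => funext fun y => ?_)
  by_cases hs : ν ∈ s <;> by_cases ht : ν ∈ t <;>
    simp [hs, ht, bell_comp, del_comp, comp_del]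

lemma Q_empty : Q (∅ : Finset (Fin M)) = 1 := by
  ext p q
  simp only [Q, matOf, Matrix.of_apply, Finset.notMem_empty, if_false, del,
    Matrix.one_apply]
  rw [Finset.prod_boole]
  have h : (∀ ν ∈ Finset.univ, (p.1 ν, p.2 ν) = (q.1 ν, q.2 ν)) ↔ p = q := by
    simp [Prod.ext_iff, funext_iff, forall_and]
  by_cases h2 : p = q
  · rw [if_pos (h.mpr h2), if_pos h2]
  · rw [if_neg (fun hc => h2 (h.mp hc)), if_neg h2]

lemma Q_herm (s : Finset (Fin M)) : (Q s)ᴴ = Q s := by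
  ext p q
  simp only [Matrix.conjTranspose_apply, Q, matOf, Matrix.of_apply]
  rw [star_prod]
  refine Finset.prod_congr rfl fun ν _ => ?_
  by_cases hs : ν ∈ s <;> simp [hs, star_bell, star_del]

end Stmt6

namespace Stmt6b
open Stmt6

variable {M : ℕ}

lemma herm_idem_nonneg (N : Matrix (Idx M) (Idx M) ℂ)
    (h1 : Nᴴ = N) (h2 : N * N = N) (v : Idx M → ℂ) :
    0 ≤ (star v ⬝ᵥ N.mulVec v).re := by
  have key : star v ⬝ᵥ N.mulVec v = star (N.mulVec v) ⬝ᵥ N.mulVec v := by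
    conv_lhs => rw [← h2]
    rw [← Matrix.mulVec_mulVec, Matrix.dotProduct_mulVec, Matrix.star_mulVec, h1]
  rw [key, dotProduct, Complex.re_sum]
  apply Finset.sum_nonneg
  intro i _
  simp only [Pi.star_apply, Complex.star_def, Complex.mul_re, Complex.conj_re,
    Complex.conj_im]
  nlinarith [sq_nonneg ((N.mulVec v) i).re, sq_nonneg ((N.mulVec v) i).im]

lemma Q_step (v : Idx M → ℂ) (hv : star v ⬝ᵥ v = 1) (s : Finset (Fin M)) (μ : Fin M) :
    (star v ⬝ᵥ (Q s).mulVec v).re - (star v ⬝ᵥ (Q (insert μ s)).mulVec v).re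
      ≤ 1 - (star v ⬝ᵥ (Q {μ}).mulVec v).re := by
  set A := Q s with hA
  set P := Q ({μ} : Finset (Fin M)) with hP
  have hA2 : A * A = A := by rw [hA, Q_mul_Q, Finset.union_self]
  have hP2 : P * P = P := by rw [hP, Q_mul_Q, Finset.union_self]
  have hAP : A * P = P * A := by rw [hA, hP, Q_mul_Q, Q_mul_Q, Finset.union_comm]
  have hins : A * P = Q (insert μ s) := by
    rw [hA, hP, Q_mul_Q, Finset.union_comm, ← Finset.insert_eq]
  set N := (1 - A) * (1 - P) with hN
  have hexp : N = 1 - P - A + A * P := by rw [hN]; noncomm_ring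
  have hexp' : (1 - P) * (1 - A) = 1 - P - A + A * P := by rw [hAP]; noncomm_ring
  have hcomm : (1 - P) * (1 - A) = (1 - A) * (1 - P) := by rw [hexp', ← hexp]
  have hiA : (1 - A) * (1 - A) = 1 - A := by
    have : (1 - A) * (1 - A) = 1 - A - A + A * A := by noncomm_ring
    rw [this, hA2]; abel
  have hiP : (1 - P) * (1 - P) = 1 - P := by
    have : (1 - P) * (1 - P) = 1 - P - P + P * P := by noncomm_ring
    rw [this, hP2]; abel
  have hNherm : Nᴴ = N := by
    rw [hN, Matrix.conjTranspose_mul, Matrix.conjTranspose_sub, Matrix.conjTranspose_sub,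
      Matrix.conjTranspose_one, Q_herm, Q_herm, hcomm]
  have hN2 : N * N = N := by
    calc N * N = (1 - A) * (((1 - P) * (1 - A)) * (1 - P)) := by
          rw [hN]; noncomm_ring
      _ = (1 - A) * (((1 - A) * (1 - P)) * (1 - P)) := by rw [hcomm]
      _ = ((1 - A) * (1 - A)) * ((1 - P) * (1 - P)) := by noncomm_ring
      _ = N := by rw [hiA, hiP, hN]
  have hnn := herm_idem_nonneg N hNherm hN2 v
  have hval : star v ⬝ᵥ N.mulVec v =
      1 - (star v ⬝ᵥ P.mulVec v) - (star v ⬝ᵥ A.mulVec v) + (star v ⬝ᵥ (A * P).mulVec v) := by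
    rw [hexp]
    simp only [Matrix.add_mulVec, Matrix.sub_mulVec, Matrix.one_mulVec,
      dotProduct_add, dotProduct_sub, hv]
  rw [hval] at hnn
  simp only [Complex.add_re, Complex.sub_re, Complex.one_re] at hnn
  rw [← hins]
  linarith

lemma main_ind (v : Idx M → ℂ) (hv : star v ⬝ᵥ v = 1) (s : Finset (Fin M)) :
    1 - (star v ⬝ᵥ (Q s).mulVec v).re ≤
      ∑ μ ∈ s, (1 - (star v ⬝ᵥ (Q {μ}).mulVec v).re) := by
  induction s using Finset.induction_on with
  | empty => simp [Q_empty, Matrix.one_mulVec, hv]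
  | insert a s h ih =>
    rw [Finset.sum_insert h]
    have := Q_step v hv s a
    linarith

end Stmt6b

namespace Stmt6c
open Stmt6 Stmt6b

variable {M : ℕ}

lemma proj_eq (Proj : Fin M → Matrix (Idx M) (Idx M) ℂ)
    (hProj : ∀ μ p q, Proj μ p q =
      (1 / 2 : ℂ) * (if p.1 μ = p.2 μ then 1 else 0) * (if q.1 μ = q.2 μ then 1 else 0) *
        (if (∀ ν, ν ≠ μ → p.1 ν = q.1 ν ∧ p.2 ν = q.2 ν) then 1 else 0))
    (μ : Fin M) : Proj μ = Q {μ} := by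
  ext p q
  rw [hProj]
  simp only [Q, matOf, Matrix.of_apply, Finset.mem_singleton]
  rw [← Finset.mul_prod_erase Finset.univ _ (Finset.mem_univ μ), if_pos rfl]
  have h2 : ∀ ν ∈ Finset.univ.erase μ,
      (if ν = μ then bell else del) (p.1 ν, p.2 ν) (q.1 ν, q.2 ν)
        = (if p.1 ν = q.1 ν ∧ p.2 ν = q.2 ν then (1:ℂ) else 0) := by
    intro ν hν
    rw [if_neg (Finset.ne_of_mem_erase hν)]
    unfold del
    exact if_congr (by simp [Prod.ext_iff]) rfl rfl
  rw [Finset.prod_congr rfl h2, Finset.prod_boole]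
  have h3 : (∀ ν ∈ Finset.univ.erase μ, p.1 ν = q.1 ν ∧ p.2 ν = q.2 ν) ↔
      (∀ ν, ν ≠ μ → p.1 ν = q.1 ν ∧ p.2 ν = q.2 ν) := by
    constructor
    · intro h ν hν; exact h ν (Finset.mem_erase.mpr ⟨hν, Finset.mem_univ ν⟩)
    · intro h ν hν; exact h ν (Finset.ne_of_mem_erase hν)
  by_cases hc : ∀ ν, ν ≠ μ → p.1 ν = q.1 ν ∧ p.2 ν = q.2 ν
  · rw [if_pos hc, if_pos (h3.mpr hc)]
    unfold bell; ring
  · rw [if_neg hc, if_neg (fun h => hc (h3.mp h))]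
    ring

lemma csq : ((1 / Real.sqrt (2 ^ M) : ℝ) : ℂ) * ((1 / Real.sqrt (2 ^ M) : ℝ) : ℂ)
    = (1/2 : ℂ) ^ M := by
  rw [← Complex.ofReal_mul]
  have h : (1 / Real.sqrt (2 ^ M)) * (1 / Real.sqrt (2 ^ M)) = 1 / 2 ^ M := by
    rw [div_mul_div_comm, one_mul, Real.mul_self_sqrt (by positivity)]
  rw [h]
  push_cast
  rw [div_pow, one_pow]

lemma Quniv (Φ : Idx M → ℂ)
    (hΦ : ∀ p, Φ p = if p.1 = p.2 then ((1 / Real.sqrt (2 ^ M) : ℝ) : ℂ) else 0)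
    (p q : Idx M) : Q (Finset.univ : Finset (Fin M)) p q = Φ p * star (Φ q) := by
  simp only [Q, matOf, Matrix.of_apply, Finset.mem_univ, if_true, bell, hΦ]
  rw [Finset.prod_mul_distrib, Finset.prod_mul_distrib, Finset.prod_const,
    Finset.prod_boole, Finset.prod_boole]
  have h1 : (∀ ν ∈ Finset.univ, p.1 ν = p.2 ν) ↔ p.1 = p.2 := by
    simp [funext_iff]
  have h2 : (∀ ν ∈ Finset.univ, q.1 ν = q.2 ν) ↔ q.1 = q.2 := by
    simp [funext_iff]
  by_cases hp : p.1 = p.2 <;> by_cases hq : q.1 = q.2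
  · rw [if_pos (h1.mpr hp), if_pos (h2.mpr hq), if_pos hp, if_pos hq]
    rw [Complex.star_def, Complex.conj_ofReal]
    rw [Finset.card_univ, Fintype.card_fin, csq]
    ring
  · rw [if_neg (fun h => hq (h2.mp h)), if_neg hq]; simp
  · rw [if_neg (fun h => hp (h1.mp h)), if_neg hp]; simp
  · rw [if_neg (fun h => hp (h1.mp h)), if_neg hp]; simp

end Stmt6c

namespace Stmt6d
open Stmt6 Stmt6b Stmt6c

variable {M : ℕ}

lemma phi_norm (Φ : Idx M → ℂ)
    (hΦ : ∀ p, Φ p = if p.1 = p.2 then ((1 / Real.sqrt (2 ^ M) : ℝ) : ℂ) else 0) :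
    star Φ ⬝ᵥ Φ = 1 := by
  simp only [dotProduct, Pi.star_apply, hΦ]
  rw [Fintype.sum_prod_type]
  have h1 : ∀ x y : Fin M → Fin 2,
      star (if (x, y).1 = (x, y).2 then ((1 / Real.sqrt (2 ^ M) : ℝ) : ℂ) else 0) *
        (if (x, y).1 = (x, y).2 then ((1 / Real.sqrt (2 ^ M) : ℝ) : ℂ) else 0)
      = if x = y then (1/2 : ℂ) ^ M else 0 := by
    intro x y
    by_cases h : x = y
    · rw [if_pos h, Complex.star_def, Complex.conj_ofReal, csq]
      exact (if_pos h).symm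
    · rw [if_neg h, star_zero, zero_mul]
      exact (if_neg h).symm
  simp_rw [h1]
  have h2 : ∀ x : Fin M → Fin 2,
      (∑ y : Fin M → Fin 2, if x = y then (1/2 : ℂ) ^ M else 0) = (1/2 : ℂ) ^ M := by
    intro x
    rw [Finset.sum_ite_eq, if_pos (Finset.mem_univ x)]
  simp_rw [h2]
  rw [Finset.sum_const, Finset.card_univ]
  have h3 : Fintype.card (Fin M → Fin 2) = 2 ^ M := by
    rw [Fintype.card_fun, Fintype.card_fin, Fintype.card_fin]
  rw [h3]
  simp only [nsmul_eq_mul, Nat.cast_pow, Nat.cast_ofNat]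
  rw [div_pow, one_pow, mul_one_div, div_self (pow_ne_zero _ (two_ne_zero (α := ℂ)))]

lemma psi_norm (U V : Matrix.unitaryGroup (Fin M → Fin 2) ℂ)
    (Φ : Idx M → ℂ)
    (hΦn : star Φ ⬝ᵥ Φ = 1)
    (ψ : Idx M → ℂ)
    (hψ : ψ = (Matrix.of (fun p q : Idx M =>
      (U : Matrix (Fin M → Fin 2) (Fin M → Fin 2) ℂ) p.1 q.1 *
        star ((V : Matrix (Fin M → Fin 2) (Fin M → Fin 2) ℂ) p.2 q.2))).mulVec Φ) :
    star ψ ⬝ᵥ ψ = 1 := by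
  set W : Matrix (Idx M) (Idx M) ℂ := Matrix.of (fun p q : Idx M =>
      (U : Matrix (Fin M → Fin 2) (Fin M → Fin 2) ℂ) p.1 q.1 *
        star ((V : Matrix (Fin M → Fin 2) (Fin M → Fin 2) ℂ) p.2 q.2)) with hW
  have hWu : Wᴴ * W = 1 := by
    ext q q'
    simp only [Matrix.mul_apply, Matrix.conjTranspose_apply, Matrix.of_apply, hW]
    rw [Fintype.sum_prod_type]
    have h1 : ∀ p1 p2,
        star ((U : Matrix (Fin M → Fin 2) (Fin M → Fin 2) ℂ) p1 q.1 *
            star ((V : Matrix (Fin M → Fin 2) (Fin M → Fin 2) ℂ) p2 q.2)) *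
          ((U : Matrix (Fin M → Fin 2) (Fin M → Fin 2) ℂ) p1 q'.1 *
            star ((V : Matrix (Fin M → Fin 2) (Fin M → Fin 2) ℂ) p2 q'.2))
        = (star ((U : Matrix (Fin M → Fin 2) (Fin M → Fin 2) ℂ) p1 q.1) *
            (U : Matrix (Fin M → Fin 2) (Fin M → Fin 2) ℂ) p1 q'.1) *
          (star ((V : Matrix (Fin M → Fin 2) (Fin M → Fin 2) ℂ) p2 q'.2) *
            (V : Matrix (Fin M → Fin 2) (Fin M → Fin 2) ℂ) p2 q.2) := by
      intro p1 p2
      rw [star_mul', star_star]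
      ring
    simp_rw [h1]
    rw [← Fintype.sum_mul_sum]
    have hU : ((U : Matrix (Fin M → Fin 2) (Fin M → Fin 2) ℂ)ᴴ *
        (U : Matrix (Fin M → Fin 2) (Fin M → Fin 2) ℂ)) q.1 q'.1 = (1 : Matrix _ _ ℂ) q.1 q'.1 := by
      rw [← Matrix.star_eq_conjTranspose, Matrix.UnitaryGroup.star_mul_self]
    have hV : ((V : Matrix (Fin M → Fin 2) (Fin M → Fin 2) ℂ)ᴴ *
        (V : Matrix (Fin M → Fin 2) (Fin M → Fin 2) ℂ)) q'.2 q.2 = (1 : Matrix _ _ ℂ) q'.2 q.2 := by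
      rw [← Matrix.star_eq_conjTranspose, Matrix.UnitaryGroup.star_mul_self]
    rw [Matrix.mul_apply] at hU hV
    simp only [Matrix.conjTranspose_apply] at hU hV
    rw [hU, hV]
    simp only [Matrix.one_apply]
    by_cases h1' : q.1 = q'.1 <;> by_cases h2' : q.2 = q'.2
    · rw [if_pos h1', if_pos h2'.symm, if_pos (Prod.ext h1' h2')]; ring
    · rw [if_pos h1', if_neg (fun h => h2' h.symm),
        if_neg (fun h => h2' (congrArg Prod.snd h))]; ring
    · rw [if_neg h1', if_neg (fun h => h1' (congrArg Prod.fst h))]; ring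
    · rw [if_neg h1', if_neg (fun h => h1' (congrArg Prod.fst h))]; ring
  rw [hψ, Matrix.star_mulVec, Matrix.dotProduct_mulVec, Matrix.vecMul_vecMul,
    hWu, Matrix.vecMul_one, hΦn]

end Stmt6d

namespace Stmt6e
open Stmt6 Stmt6b Stmt6c Stmt6d

variable {M : ℕ}

lemma hst_eq (Φ : Idx M → ℂ)
    (hΦ : ∀ p, Φ p = if p.1 = p.2 then ((1 / Real.sqrt (2 ^ M) : ℝ) : ℂ) else 0)
    (ψ : Idx M → ℂ) :
    (star ψ ⬝ᵥ (Q (Finset.univ : Finset (Fin M))).mulVec ψ).re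
      = ‖star Φ ⬝ᵥ ψ‖ ^ 2 := by
  have h1 : star ψ ⬝ᵥ (Q (Finset.univ : Finset (Fin M))).mulVec ψ
      = star (star Φ ⬝ᵥ ψ) * (star Φ ⬝ᵥ ψ) := by
    calc star ψ ⬝ᵥ (Q (Finset.univ : Finset (Fin M))).mulVec ψ
        = ∑ p, ∑ q, (star (ψ p) * Φ p) * (star (Φ q) * ψ q) := by
          simp only [dotProduct, Matrix.mulVec, Pi.star_apply]
          refine Finset.sum_congr rfl fun p _ => ?_
          rw [Finset.mul_sum]
          refine Finset.sum_congr rfl fun q _ => ?_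
          rw [Quniv Φ hΦ p q]
          ring
      _ = (∑ p, star (ψ p) * Φ p) * (∑ q, star (Φ q) * ψ q) := (Fintype.sum_mul_sum _ _).symm
      _ = star (star Φ ⬝ᵥ ψ) * (star Φ ⬝ᵥ ψ) := by
          congr 1
          rw [dotProduct, star_sum]
          refine Finset.sum_congr rfl fun p _ => ?_
          simp only [Pi.star_apply, star_mul', star_star]
          ring
  rw [h1, Complex.star_def, ← Complex.normSq_eq_conj_mul_self, ← Complex.sq_norm]
  exact Complex.ofReal_re _

end Stmt6e

/-- `C_HST(U,V) ≤ ∑_μ C_LHST^{(μ)}(U,V)` (i.e. `C_HST ≤ M · C_LHST`) for unitaries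
`U, V` on an `M`-qubit system. Here `Φ` is the tensor product of `M` Bell pairs
between the registers `A` and `B`, `ψ = (U ⊗ V*) Φ`, `Proj μ` is the projector onto
the `μ`-th Bell pair, `C_HST = 1 - |⟨Φ|ψ⟩|²` and `C_LHST^{(μ)} = 1 - ⟨ψ|Proj μ|ψ⟩`. -/
theorem stmt_6 (M : ℕ)
    (U V : Matrix.unitaryGroup (Fin M → Fin 2) ℂ)
    (Φ : ((Fin M → Fin 2) × (Fin M → Fin 2)) → ℂ)
    (hΦ : ∀ p, Φ p = if p.1 = p.2 then ((1 / Real.sqrt (2 ^ M) : ℝ) : ℂ) else 0)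
    (Proj : Fin M →
      Matrix ((Fin M → Fin 2) × (Fin M → Fin 2)) ((Fin M → Fin 2) × (Fin M → Fin 2)) ℂ)
    (hProj : ∀ μ p q, Proj μ p q =
      (1 / 2 : ℂ) * (if p.1 μ = p.2 μ then 1 else 0) * (if q.1 μ = q.2 μ then 1 else 0) *
        (if (∀ ν, ν ≠ μ → p.1 ν = q.1 ν ∧ p.2 ν = q.2 ν) then 1 else 0))
    (ψ : ((Fin M → Fin 2) × (Fin M → Fin 2)) → ℂ)
    (hψ : ψ = (Matrix.of (fun p q : (Fin M → Fin 2) × (Fin M → Fin 2) =>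
      (U : Matrix (Fin M → Fin 2) (Fin M → Fin 2) ℂ) p.1 q.1 *
        star ((V : Matrix (Fin M → Fin 2) (Fin M → Fin 2) ℂ) p.2 q.2))).mulVec Φ) :
    1 - ‖star Φ ⬝ᵥ ψ‖ ^ 2 ≤ ∑ μ, (1 - (star ψ ⬝ᵥ (Proj μ).mulVec ψ).re) := by
  have hPQ : ∀ μ, Proj μ = Stmt6.Q {μ} := Stmt6c.proj_eq Proj hProj
  have hψn : star ψ ⬝ᵥ ψ = 1 :=
    Stmt6d.psi_norm U V Φ (Stmt6d.phi_norm Φ hΦ) ψ hψ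
  calc 1 - ‖star Φ ⬝ᵥ ψ‖ ^ 2
      = 1 - (star ψ ⬝ᵥ (Stmt6.Q (Finset.univ : Finset (Fin M))).mulVec ψ).re := by
        rw [Stmt6e.hst_eq Φ hΦ ψ]
    _ ≤ ∑ μ ∈ Finset.univ, (1 - (star ψ ⬝ᵥ (Stmt6.Q {μ}).mulVec ψ).re) :=
        Stmt6b.main_ind ψ hψn Finset.univ
    _ = ∑ μ, (1 - (star ψ ⬝ᵥ (Proj μ).mulVec ψ).re) :=
        Finset.sum_congr rfl fun μ _ => by rw [hPQ μ]
end

section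
/- Assume the Lieb–Robinson-type bound ‖U(t)† F_j U(t) − U'(t)† F_j U'(t)‖ ≤ ε_LR for a local operator F_j of unit norm, where U and U' are two unitary time evolutions. Then for any unitary ansatz V and Bell-pair cost functions, |C_LHST^{(μ)}(U, V) − C_LHST^{(μ)}(U', V)| ≤ 2 ε_LR, provided the projector Π_μ decomposes as Π_μ = (1/2) Σ_{i=1}^{4} F_i^A F_i^B with ‖F_i^A‖ = ‖F_i^B‖ = 1. -/
open Matrix Kronecker
open scoped Matrix.Norms.L2Operator

set_option linter.unusedSectionVars false
set_option linter.deprecated false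

namespace Stmt11Aux

variable {ι : Type*} [Fintype ι] [DecidableEq ι]

lemma enorm_sq {m : Type*} [Fintype m] (x : EuclideanSpace ℂ m) : ‖x‖ ^ 2 = ∑ i, ‖x i‖ ^ 2 := by
  rw [EuclideanSpace.norm_eq, Real.sq_sqrt]; positivity

lemma one_kron_mulVec (B : Matrix ι ι ℂ) (y : ι × ι → ℂ) (i j : ι) :
    (((1 : Matrix ι ι ℂ) ⊗ₖ B) *ᵥ y) (i, j) = (B *ᵥ fun l => y (i, l)) j := by
  simp [Matrix.mulVec, dotProduct, Fintype.sum_prod_type, Matrix.one_apply,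
    ite_mul, zero_mul, Finset.sum_ite_eq]

lemma kron_one_mulVec (A : Matrix ι ι ℂ) (y : ι × ι → ℂ) (i j : ι) :
    ((A ⊗ₖ (1 : Matrix ι ι ℂ)) *ᵥ y) (i, j) = (A *ᵥ fun k => y (k, j)) i := by
  simp [Matrix.mulVec, dotProduct, Fintype.sum_prod_type, Matrix.one_apply,
    mul_ite, mul_zero, ite_mul, zero_mul, Finset.sum_ite_eq, Finset.mul_sum]

lemma one_kron_norm_le (B : Matrix ι ι ℂ) : ‖(1 : Matrix ι ι ℂ) ⊗ₖ B‖ ≤ ‖B‖ := by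
  rw [Matrix.l2_opNorm_def]
  refine ContinuousLinearMap.opNorm_le_bound _ (norm_nonneg _) fun x => ?_
  refine le_of_pow_le_pow_left₀ two_ne_zero (by positivity) ?_
  have hx : ((Matrix.toEuclideanLin.trans LinearMap.toContinuousLinearMap)
      ((1 : Matrix ι ι ℂ) ⊗ₖ B)) x
      = (EuclideanSpace.equiv (ι × ι) ℂ).symm (((1 : Matrix ι ι ℂ) ⊗ₖ B) *ᵥ x) := rfl
  rw [hx, mul_pow, enorm_sq, enorm_sq]
  calc ∑ p : ι × ι, ‖((EuclideanSpace.equiv (ι × ι) ℂ).symm (((1 : Matrix ι ι ℂ) ⊗ₖ B) *ᵥ x)) p‖ ^ 2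
      = ∑ i : ι, ∑ j : ι, ‖(B *ᵥ fun l => x (i, l)) j‖ ^ 2 := by
        rw [Fintype.sum_prod_type]
        exact Finset.sum_congr rfl fun i _ => Finset.sum_congr rfl fun j _ => by
          rw [show ((EuclideanSpace.equiv (ι × ι) ℂ).symm (((1 : Matrix ι ι ℂ) ⊗ₖ B) *ᵥ x)) (i, j)
            = (((1 : Matrix ι ι ℂ) ⊗ₖ B) *ᵥ x) (i, j) from rfl, one_kron_mulVec]
    _ ≤ ∑ i : ι, ‖B‖ ^ 2 * ∑ j : ι, ‖x (i, j)‖ ^ 2 := by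
        refine Finset.sum_le_sum fun i _ => ?_
        have h := B.l2_opNorm_mulVec ((EuclideanSpace.equiv ι ℂ).symm (fun l => x (i, l)))
        have h2 := pow_le_pow_left₀ (norm_nonneg _) h 2
        rw [enorm_sq] at h2
        calc ∑ j : ι, ‖(B *ᵥ fun l => x (i, l)) j‖ ^ 2
            ≤ (‖B‖ * ‖(EuclideanSpace.equiv ι ℂ).symm (fun l => x (i, l))‖) ^ 2 := h2
          _ = ‖B‖ ^ 2 * ∑ j : ι, ‖x (i, j)‖ ^ 2 := by rw [mul_pow, enorm_sq]; rfl
    _ = ‖B‖ ^ 2 * ∑ p : ι × ι, ‖x p‖ ^ 2 := by rw [Fintype.sum_prod_type, Finset.mul_sum]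

lemma kron_one_norm_le (A : Matrix ι ι ℂ) : ‖A ⊗ₖ (1 : Matrix ι ι ℂ)‖ ≤ ‖A‖ := by
  rw [Matrix.l2_opNorm_def]
  refine ContinuousLinearMap.opNorm_le_bound _ (norm_nonneg _) fun x => ?_
  refine le_of_pow_le_pow_left₀ two_ne_zero (by positivity) ?_
  have hx : ((Matrix.toEuclideanLin.trans LinearMap.toContinuousLinearMap)
      (A ⊗ₖ (1 : Matrix ι ι ℂ))) x
      = (EuclideanSpace.equiv (ι × ι) ℂ).symm ((A ⊗ₖ (1 : Matrix ι ι ℂ)) *ᵥ x) := rfl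
  rw [hx, mul_pow, enorm_sq, enorm_sq]
  calc ∑ p : ι × ι, ‖((EuclideanSpace.equiv (ι × ι) ℂ).symm ((A ⊗ₖ (1 : Matrix ι ι ℂ)) *ᵥ x)) p‖ ^ 2
      = ∑ j : ι, ∑ i : ι, ‖(A *ᵥ fun k => x (k, j)) i‖ ^ 2 := by
        rw [Fintype.sum_prod_type_right]
        exact Finset.sum_congr rfl fun j _ => Finset.sum_congr rfl fun i _ => by
          rw [show ((EuclideanSpace.equiv (ι × ι) ℂ).symm ((A ⊗ₖ (1 : Matrix ι ι ℂ)) *ᵥ x)) (i, j)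
            = ((A ⊗ₖ (1 : Matrix ι ι ℂ)) *ᵥ x) (i, j) from rfl, kron_one_mulVec]
    _ ≤ ∑ j : ι, ‖A‖ ^ 2 * ∑ i : ι, ‖x (i, j)‖ ^ 2 := by
        refine Finset.sum_le_sum fun j _ => ?_
        have h := A.l2_opNorm_mulVec ((EuclideanSpace.equiv ι ℂ).symm (fun k => x (k, j)))
        have h2 := pow_le_pow_left₀ (norm_nonneg _) h 2
        rw [enorm_sq] at h2
        calc ∑ i : ι, ‖(A *ᵥ fun k => x (k, j)) i‖ ^ 2
            ≤ (‖A‖ * ‖(EuclideanSpace.equiv ι ℂ).symm (fun k => x (k, j))‖) ^ 2 := h2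
          _ = ‖A‖ ^ 2 * ∑ i : ι, ‖x (i, j)‖ ^ 2 := by rw [mul_pow, enorm_sq]; rfl
    _ = ‖A‖ ^ 2 * ∑ p : ι × ι, ‖x p‖ ^ 2 := by rw [Fintype.sum_prod_type_right, Finset.mul_sum]

lemma kron_norm_le (A B : Matrix ι ι ℂ) : ‖A ⊗ₖ B‖ ≤ ‖A‖ * ‖B‖ := by
  have h : A ⊗ₖ B = (A ⊗ₖ (1 : Matrix ι ι ℂ)) * ((1 : Matrix ι ι ℂ) ⊗ₖ B) := by
    rw [← Matrix.mul_kronecker_mul, mul_one, one_mul]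
  rw [h]
  exact (Matrix.l2_opNorm_mul _ _).trans
    (mul_le_mul (kron_one_norm_le A) (one_kron_norm_le B) (norm_nonneg _) (norm_nonneg _))

lemma mulVec_enorm_le {m : Type*} [Fintype m] [DecidableEq m] (A : Matrix m m ℂ) (x : m → ℂ) :
    ‖(EuclideanSpace.equiv m ℂ).symm (A *ᵥ x)‖ ≤ ‖A‖ * ‖(EuclideanSpace.equiv m ℂ).symm x‖ :=
  A.l2_opNorm_mulVec ((EuclideanSpace.equiv m ℂ).symm x)

lemma quad_bound {m : Type*} [Fintype m] [DecidableEq m] (A : Matrix m m ℂ) (x : m → ℂ) :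
    ‖star x ⬝ᵥ A *ᵥ x‖ ≤ ‖A‖ * ‖(EuclideanSpace.equiv m ℂ).symm x‖ ^ 2 := by
  have h1 : star x ⬝ᵥ A *ᵥ x =
      inner ℂ ((EuclideanSpace.equiv m ℂ).symm x) ((EuclideanSpace.equiv m ℂ).symm (A *ᵥ x)) := by
    simp [PiLp.inner_apply, dotProduct, mul_comm]
  rw [h1]
  calc ‖inner (𝕜 := ℂ) ((EuclideanSpace.equiv m ℂ).symm x) ((EuclideanSpace.equiv m ℂ).symm (A *ᵥ x))‖
      ≤ ‖(EuclideanSpace.equiv m ℂ).symm x‖ * ‖(EuclideanSpace.equiv m ℂ).symm (A *ᵥ x)‖ :=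
        norm_inner_le_norm _ _
    _ ≤ ‖(EuclideanSpace.equiv m ℂ).symm x‖ * (‖A‖ * ‖(EuclideanSpace.equiv m ℂ).symm x‖) := by
        gcongr; exact mulVec_enorm_le A x
    _ = ‖A‖ * ‖(EuclideanSpace.equiv m ℂ).symm x‖ ^ 2 := by ring

lemma unitary_norm_le {X : Matrix ι ι ℂ} (h : X ∈ Matrix.unitaryGroup ι ℂ) : ‖X‖ ≤ 1 := by
  have h1 : Xᴴ * X = 1 := by
    simpa [Matrix.star_eq_conjTranspose] using (Matrix.mem_unitaryGroup_iff'.mp h)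
  have h2 : ‖X‖ * ‖X‖ = ‖(1 : Matrix ι ι ℂ)‖ := by
    rw [← h1, Matrix.l2_opNorm_conjTranspose_mul_self]
  have h3 : ‖(1 : Matrix ι ι ℂ)‖ ≤ 1 := by
    rw [Matrix.cstar_norm_def, _root_.map_one Matrix.toEuclideanCLM,
      ContinuousLinearMap.one_def]
    exact ContinuousLinearMap.norm_id_le
  nlinarith [norm_nonneg X]

lemma conj_mem_unitary {X : Matrix ι ι ℂ} (h : X ∈ Matrix.unitaryGroup ι ℂ) :
    X.map (starRingEnd ℂ) ∈ Matrix.unitaryGroup ι ℂ := by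
  rw [Matrix.mem_unitaryGroup_iff'] at h ⊢
  rw [Matrix.star_eq_conjTranspose] at h ⊢
  rw [← Matrix.conjTranspose_map (starRingEnd ℂ) (fun a => by simp), ← Matrix.map_mul, h,
    Matrix.map_one _ (map_zero _) (_root_.map_one _)]

lemma sum_mulVec {m : Type*} [Fintype m] {κ : Type*} (s : Finset κ)
    (M : κ → Matrix m m ℂ) (v : m → ℂ) :
    (∑ i ∈ s, M i) *ᵥ v = ∑ i ∈ s, (M i *ᵥ v) := by
  ext p
  simp only [Matrix.mulVec, dotProduct, Finset.sum_apply, Matrix.sum_apply,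
    Finset.sum_mul]
  rw [Finset.sum_comm]

lemma dotProduct_sum' {m : Type*} [Fintype m] {κ : Type*} (s : Finset κ)
    (v : m → ℂ) (w : κ → m → ℂ) :
    v ⬝ᵥ (∑ i ∈ s, w i) = ∑ i ∈ s, v ⬝ᵥ w i := by
  simp only [dotProduct, Finset.sum_apply, Finset.mul_sum]
  rw [Finset.sum_comm]

lemma kron_conjTranspose (A B : Matrix ι ι ℂ) : (A ⊗ₖ B)ᴴ = Aᴴ ⊗ₖ Bᴴ := by
  ext ⟨i, j⟩ ⟨k, l⟩
  simp [Matrix.conjTranspose_apply, mul_comm]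

lemma sub_kron (A B C : Matrix ι ι ℂ) : (A - B) ⊗ₖ C = A ⊗ₖ C - B ⊗ₖ C := by
  ext ⟨i, j⟩ ⟨k, l⟩
  simp [sub_mul]

lemma phi_norm_sq_le (Φ : ι × ι → ℂ)
    (hΦ : ∀ p, Φ p = if p.1 = p.2 then ((1 / Real.sqrt (Fintype.card ι) : ℝ) : ℂ) else 0) :
    ‖(EuclideanSpace.equiv (ι × ι) ℂ).symm Φ‖ ^ 2 ≤ 1 := by
  have h : ‖(EuclideanSpace.equiv (ι × ι) ℂ).symm Φ‖ ^ 2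
      = (Fintype.card ι : ℝ) * (1 / Real.sqrt (Fintype.card ι)) ^ 2 := by
    rw [show ‖(EuclideanSpace.equiv (ι × ι) ℂ).symm Φ‖ ^ 2 = ∑ p : ι × ι, ‖Φ p‖ ^ 2 from by
      rw [EuclideanSpace.norm_eq, Real.sq_sqrt (by positivity)]; rfl]
    simp only [hΦ]
    rw [Fintype.sum_prod_type]
    have : ∀ i : ι, (∑ j : ι, ‖if i = j then ((1 / Real.sqrt (Fintype.card ι) : ℝ) : ℂ) else 0‖ ^ 2)
        = (1 / Real.sqrt (Fintype.card ι)) ^ 2 := by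
      intro i
      rw [Finset.sum_eq_single i]
      · simp [Complex.norm_real,
          abs_of_nonneg (by positivity : (0:ℝ) ≤ 1 / Real.sqrt (Fintype.card ι))]
      · intro j _ hj
        simp [Ne.symm hj]
      · simp
    simp only [this, Finset.sum_const, Finset.card_univ, nsmul_eq_mul]
  rw [h]
  rcases Nat.eq_zero_or_pos (Fintype.card ι) with h0 | h0
  · simp [h0]
  · have hc : (0 : ℝ) < (Fintype.card ι : ℝ) := by exact_mod_cast h0
    rw [div_pow, one_pow, Real.sq_sqrt hc.le, mul_one_div, div_self hc.ne']

end Stmt11Aux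

/-- If the Lieb–Robinson-type bound `‖U†FᵢᴬU − U'†FᵢᴬU'‖ ≤ ε_LR` holds for the
unit-norm local operators `Fᵢᴬ` appearing in the decomposition
`Π_μ = (1/2) ∑ᵢ Fᵢᴬ ⊗ Fᵢᴮ` of the Bell-pair projector, then the LHST cost
functions (with ansatz `V` on the copy register) of the two time evolutions `U`
and `U'` differ by at most `2 ε_LR`. Operator norms are taken via the action on
the Euclidean space. -/
theorem stmt_11 {ι : Type*} [Fintype ι] [DecidableEq ι] (ε : ℝ)
    (U U' V : Matrix.unitaryGroup ι ℂ)
    (FA FB : Fin 4 → Matrix ι ι ℂ)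
    (hFA : ∀ i, ‖Matrix.toEuclideanCLM (𝕜 := ℂ) (FA i)‖ = 1)
    (hFB : ∀ i, ‖Matrix.toEuclideanCLM (𝕜 := ℂ) (FB i)‖ = 1)
    (hLR : ∀ i, ‖Matrix.toEuclideanCLM (𝕜 := ℂ)
        ((U : Matrix ι ι ℂ)ᴴ * FA i * (U : Matrix ι ι ℂ) -
          (U' : Matrix ι ι ℂ)ᴴ * FA i * (U' : Matrix ι ι ℂ))‖ ≤ ε)
    (Proj : Matrix (ι × ι) (ι × ι) ℂ)
    (hProj : Proj = (1 / 2 : ℂ) • ∑ i, (FA i ⊗ₖ FB i))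
    (Φ : ι × ι → ℂ)
    (hΦ : ∀ p, Φ p = if p.1 = p.2 then ((1 / Real.sqrt (Fintype.card ι) : ℝ) : ℂ) else 0)
    (C : Matrix.unitaryGroup ι ℂ → ℝ)
    (hC : ∀ W : Matrix.unitaryGroup ι ℂ,
      C W = 1 - (star (((W : Matrix ι ι ℂ) ⊗ₖ ((V : Matrix ι ι ℂ).map (starRingEnd ℂ))).mulVec Φ) ⬝ᵥ
        Proj.mulVec (((W : Matrix ι ι ℂ) ⊗ₖ ((V : Matrix ι ι ℂ).map (starRingEnd ℂ))).mulVec Φ)).re) :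
    |C U - C U'| ≤ 2 * ε := by
  classical
  have hFB' : ∀ i, ‖FB i‖ = 1 := fun i => (Matrix.cstar_norm_def (FB i)).trans (hFB i)
  have hLR' : ∀ i, ‖(U : Matrix ι ι ℂ)ᴴ * FA i * (U : Matrix ι ι ℂ) -
      (U' : Matrix ι ι ℂ)ᴴ * FA i * (U' : Matrix ι ι ℂ)‖ ≤ ε :=
    fun i => le_trans (le_of_eq (Matrix.cstar_norm_def _)) (hLR i)
  have hε : 0 ≤ ε := le_trans (norm_nonneg _) (hLR' 0)
  set Vc : Matrix ι ι ℂ := (V : Matrix ι ι ℂ).map (starRingEnd ℂ) with hVcdef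
  have hVcU : Vc ∈ Matrix.unitaryGroup ι ℂ := Stmt11Aux.conj_mem_unitary V.2
  have hVcn : ‖Vc‖ ≤ 1 := Stmt11Aux.unitary_norm_le hVcU
  have hG : ∀ i, ‖Vcᴴ * FB i * Vc‖ ≤ 1 := by
    intro i
    have h1 : ‖Vcᴴ * FB i‖ ≤ 1 := by
      refine le_trans (Matrix.l2_opNorm_mul _ _) ?_
      rw [Matrix.l2_opNorm_conjTranspose, hFB' i, mul_one]
      exact hVcn
    calc ‖Vcᴴ * FB i * Vc‖ ≤ ‖Vcᴴ * FB i‖ * ‖Vc‖ := Matrix.l2_opNorm_mul _ _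
      _ ≤ 1 * 1 := mul_le_mul h1 hVcn (norm_nonneg _) zero_le_one
      _ = 1 := mul_one 1
  have key : ∀ W : Matrix.unitaryGroup ι ℂ,
      star (((W : Matrix ι ι ℂ) ⊗ₖ Vc) *ᵥ Φ) ⬝ᵥ Proj *ᵥ (((W : Matrix ι ι ℂ) ⊗ₖ Vc) *ᵥ Φ)
        = (1 / 2 : ℂ) * ∑ i, star Φ ⬝ᵥ
            ((((W : Matrix ι ι ℂ)ᴴ * FA i * (W : Matrix ι ι ℂ)) ⊗ₖ (Vcᴴ * FB i * Vc)) *ᵥ Φ) := by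
    intro W
    rw [hProj, Matrix.smul_mulVec, dotProduct_smul, Stmt11Aux.sum_mulVec,
      Stmt11Aux.dotProduct_sum', smul_eq_mul]
    congr 1
    refine Finset.sum_congr rfl fun i _ => ?_
    rw [Matrix.star_mulVec, Matrix.mulVec_mulVec, Matrix.dotProduct_mulVec,
      Matrix.vecMul_vecMul, ← Matrix.dotProduct_mulVec]
    congr 1
    rw [Stmt11Aux.kron_conjTranspose]
    rw [← Matrix.mul_kronecker_mul, ← Matrix.mul_kronecker_mul, mul_assoc, mul_assoc]
  have hq : C U - C U' = ((1 / 2 : ℂ) * ∑ i, star Φ ⬝ᵥ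
      ((((U' : Matrix ι ι ℂ)ᴴ * FA i * (U' : Matrix ι ι ℂ) -
        (U : Matrix ι ι ℂ)ᴴ * FA i * (U : Matrix ι ι ℂ)) ⊗ₖ (Vcᴴ * FB i * Vc)) *ᵥ Φ)).re := by
    rw [hC U, hC U', key U, key U']
    rw [show ∀ (z w : ℂ), (1 - z.re) - (1 - w.re) = (w - z).re from fun z w => by
      simp [Complex.sub_re]]
    congr 1
    rw [← mul_sub, ← Finset.sum_sub_distrib]
    congr 1
    refine Finset.sum_congr rfl fun i _ => ?_
    rw [Stmt11Aux.sub_kron, Matrix.sub_mulVec, dotProduct_sub]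
  rw [hq]
  refine le_trans (Complex.abs_re_le_norm _) ?_
  rw [norm_mul]
  have h12 : ‖(1 / 2 : ℂ)‖ = 1 / 2 := by
    rw [norm_div]; simp [Complex.norm_two]
  rw [h12]
  have hterm : ∀ i : Fin 4, ‖star Φ ⬝ᵥ
      ((((U' : Matrix ι ι ℂ)ᴴ * FA i * (U' : Matrix ι ι ℂ) -
        (U : Matrix ι ι ℂ)ᴴ * FA i * (U : Matrix ι ι ℂ)) ⊗ₖ (Vcᴴ * FB i * Vc)) *ᵥ Φ)‖ ≤ ε := by
    intro i
    refine le_trans (Stmt11Aux.quad_bound _ _) ?_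
    have hD : ‖(U' : Matrix ι ι ℂ)ᴴ * FA i * (U' : Matrix ι ι ℂ) -
        (U : Matrix ι ι ℂ)ᴴ * FA i * (U : Matrix ι ι ℂ)‖ ≤ ε := by
      rw [norm_sub_rev]; exact hLR' i
    have hDG : ‖((U' : Matrix ι ι ℂ)ᴴ * FA i * (U' : Matrix ι ι ℂ) -
        (U : Matrix ι ι ℂ)ᴴ * FA i * (U : Matrix ι ι ℂ)) ⊗ₖ (Vcᴴ * FB i * Vc)‖ ≤ ε := by
      refine le_trans (Stmt11Aux.kron_norm_le _ _) ?_
      calc _ ≤ ε * 1 := mul_le_mul hD (hG i) (norm_nonneg _) hε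
        _ = ε := mul_one ε
    calc ‖((U' : Matrix ι ι ℂ)ᴴ * FA i * (U' : Matrix ι ι ℂ) -
          (U : Matrix ι ι ℂ)ᴴ * FA i * (U : Matrix ι ι ℂ)) ⊗ₖ (Vcᴴ * FB i * Vc)‖ *
          ‖(EuclideanSpace.equiv (ι × ι) ℂ).symm Φ‖ ^ 2
        ≤ ε * 1 := mul_le_mul hDG (Stmt11Aux.phi_norm_sq_le Φ hΦ) (by positivity) hε
      _ = ε := mul_one ε
  calc (1 / 2 : ℝ) * ‖∑ i, star Φ ⬝ᵥ
        ((((U' : Matrix ι ι ℂ)ᴴ * FA i * (U' : Matrix ι ι ℂ) -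
          (U : Matrix ι ι ℂ)ᴴ * FA i * (U : Matrix ι ι ℂ)) ⊗ₖ (Vcᴴ * FB i * Vc)) *ᵥ Φ)‖
      ≤ (1 / 2 : ℝ) * ∑ i : Fin 4, ε := by
        refine mul_le_mul_of_nonneg_left ?_ (by norm_num)
        refine le_trans (norm_sum_le _ _) ?_
        exact Finset.sum_le_sum fun i _ => hterm i
    _ = 2 * ε := by simp [Finset.sum_const]; ring
end
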